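/- Let G be any graph and let v be an assignment in a Schelling game on G such that there exists an agent i of some type T_l with the property that every other agent of type T_l is adjacent only to agents of type T_l. Then v is a swap-equilibrium. -/
import Mathlib


open SimpleGraph

variable {V : Type*}

/-- Utility of the agent occupying vertex `v` in graph `H` under type assignment `τ`:
the fraction of same-type agents among occupied neighbors (0 if no neighbors). -/
noncomputable def utility (H : SimpleGraph V) (τ : V → Bool) (v : V) : ℚ := by
  classical
  exact if H.neighborSet v = ∅ then 0
    else ((H.neighborSet v ∩ {w | τ w = τ v}).ncard : ℚ) / ((H.neighborSet v).ncard : ℚ)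

/-- The type function after the agents on vertices `i` and `j` exchange their vertices. -/
noncomputable def swapAt (τ : V → Bool) (i j : V) : V → Bool := fun v => by
  classical
  exact if v = i then τ j else if v = j then τ i else τ v

lemma swapAt_left (τ : V → Bool) (i j : V) : swapAt τ i j i = τ j := by
  simp [swapAt]

lemma swapAt_right (τ : V → Bool) (i j : V) : swapAt τ i j j = τ i := by
  classical
  by_cases h : j = i <;> simp [swapAt, h]

lemma swapAt_other (τ : V → Bool) (i j v : V) (hvi : v ≠ i) (hvj : v ≠ j) :
    swapAt τ i j v = τ v := by
  simp [swapAt, hvi, hvj]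

lemma swapAt_comm (τ : V → Bool) (i j : V) : swapAt τ j i = swapAt τ i j := by
  classical
  funext v
  by_cases hvi : v = i <;> by_cases hvj : v = j <;> simp_all [swapAt]

lemma utility_nonneg (H : SimpleGraph V) (τ : V → Bool) (v : V) :
    0 ≤ utility H τ v := by
  unfold utility
  split
  · exact le_refl 0
  · positivity

lemma utility_eq_zero_of_empty_inter (H : SimpleGraph V) (τ : V → Bool) (v : V)
    (h : H.neighborSet v ∩ {w | τ w = τ v} = ∅) : utility H τ v = 0 := by
  unfold utility
  split
  · rfl
  · rw [h, Set.ncard_empty]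
    simp

/-- The swap of the (distinct-type) agents on `i` and `j` strictly increases both utilities. -/
def ProfitableSwap (H : SimpleGraph V) (τ : V → Bool) (i j : V) : Prop :=
  τ i ≠ τ j ∧
  utility H τ i < utility H (swapAt τ i j) j ∧
  utility H τ j < utility H (swapAt τ i j) i

/-- Swap-equilibrium: no profitable swap exists. -/
def IsSwapEq (H : SimpleGraph V) (τ : V → Bool) : Prop :=
  ∀ i j : V, ¬ ProfitableSwap H τ i j

/-- If there is an agent `i` of some type such that every other agent of that type is
adjacent only to agents of that type, then the assignment is a swap-equilibrium. -/
theorem swapEq_of_all_but_one_only_friends [Fintype V] (G : SimpleGraph V) (τ : V → Bool)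
    (h : ∃ i : V, ∀ j : V, j ≠ i → τ j = τ i → ∀ w : V, G.Adj j w → τ w = τ j) :
    IsSwapEq G τ := by
  classical
  obtain ⟨i₀, hi₀⟩ := h
  -- key: no profitable swap `(x, y)` when `τ x = τ i₀`
  have key : ∀ x y : V, τ x = τ i₀ → τ x ≠ τ y →
      ¬ (utility G τ x < utility G (swapAt τ x y) y ∧
         utility G τ y < utility G (swapAt τ x y) x) := by
    intro x y hx0 hxy ⟨h1, h2⟩
    by_cases hxi : x = i₀
    · -- all type-`τ x` neighbors of `y` other than `x` would need to be `i₀ = x`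
      subst hxi
      have hzero : G.neighborSet y ∩ {w | swapAt τ x y w = swapAt τ x y y} = ∅ := by
        ext w
        simp only [Set.mem_inter_iff, Set.mem_setOf_eq, Set.mem_empty_iff_false, iff_false,
          not_and, mem_neighborSet]
        intro hadj
        have hwy : w ≠ y := Ne.symm (G.ne_of_adj hadj)
        rw [swapAt_right τ x y]
        by_cases hwx : w = x
        · subst hwx; simp [swapAt_left]; exact fun hh => hxy hh.symm
        · rw [swapAt_other τ x y w hwx hwy]
          intro hwτ
          have := hi₀ w hwx (hwτ.trans hx0) y (G.adj_symm hadj)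
          exact hxy (hwτ.symm.trans this.symm)
      rw [utility_eq_zero_of_empty_inter G _ y hzero] at h1
      exact absurd (utility_nonneg G τ x) (not_le.mpr h1)
    · -- every neighbor of `x` has type `τ x`, so after the swap nobody at `x` matches `τ y`
      have hall : ∀ w : V, G.Adj x w → τ w = τ x := hi₀ x hxi hx0
      have hzero : G.neighborSet x ∩ {w | swapAt τ x y w = swapAt τ x y x} = ∅ := by
        ext w
        simp only [Set.mem_inter_iff, Set.mem_setOf_eq, Set.mem_empty_iff_false, iff_false,
          not_and, mem_neighborSet]
        intro hadj
        have hwx : w ≠ x := Ne.symm (G.ne_of_adj hadj)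
        rw [swapAt_left]
        by_cases hwy : w = y
        · subst hwy; rw [swapAt_right]; exact fun hh => hxy hh
        · rw [swapAt_other τ x y w hwx hwy]
          rw [hall w hadj]
          exact hxy
      rw [utility_eq_zero_of_empty_inter G _ x hzero] at h2
      exact absurd (utility_nonneg G τ y) (not_le.mpr h2)
  intro i j ⟨hne, h1, h2⟩
  by_cases hi : τ i = τ i₀
  · exact key i j hi hne ⟨h1, h2⟩
  · have hj : τ j = τ i₀ := by
      cases hτi : τ i <;> cases hτj : τ j <;> cases hτ0 : τ i₀ <;>
        simp_all
    rw [swapAt_comm τ j i] at h1 h2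
    exact key j i hj (Ne.symm hne) ⟨h2, h1⟩
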